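/- Let (a_k)_{k≥1} satisfy ∑_k |a_k|/k < ∞ and γ² := ∑_k a_k/k > 0. Fix an integer q ≥ 1 and assume ∑_k k^{q}|a_k| e^{-kα} < ∞ for all α > 0. Setting α = γ n^{-1/2} and κ_q(n) := ∑_{ℓ=1}^∞ ℓ^q ∑_{k=1}^∞ k^q a_k e^{-kαℓ}, one has κ_q(n) ~ (q!/γ^{q-1}) n^{(q+1)/2} as n → ∞. -/

import Mathlib

open Filter Real Set MeasureTheory



noncomputable def Sq (q : ℕ) (t : ℝ) : ℝ := ∑' ℓ : ℕ, ((ℓ + 1 : ℝ)) ^ q * Real.exp (-(t * (ℓ + 1)))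

lemma summable_Sq (q : ℕ) {t : ℝ} (ht : 0 < t) :
    Summable (fun ℓ : ℕ => ((ℓ + 1 : ℝ)) ^ q * Real.exp (-(t * (ℓ + 1)))) := by
  have h := (Real.summable_pow_mul_exp_neg_nat_mul q ht).comp_injective (add_right_injective 1)
  refine h.congr fun ℓ => ?_
  simp only [Function.comp]
  push_cast
  ring_nf

lemma pow_le_exp_half (q : ℕ) {x : ℝ} (hx : 0 ≤ x) :
    x ^ q ≤ 2 ^ q * q.factorial * Real.exp (x / 2) := by
  have h := Real.pow_div_factorial_le_exp (x := x / 2) (by positivity) q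
  have h2 : (x / 2) ^ q = x ^ q / 2 ^ q := div_pow x 2 q
  rw [h2] at h
  have hf : (0:ℝ) < q.factorial := by positivity
  rw [div_div, div_le_iff₀ (by positivity)] at h
  calc x ^ q ≤ Real.exp (x/2) * (2 ^ q * q.factorial) := h
    _ = 2 ^ q * q.factorial * Real.exp (x/2) := by ring

lemma Sq_term_bound (q : ℕ) {t : ℝ} (ht : 0 < t) (ℓ : ℕ) :
    t ^ (q+1) * (((ℓ + 1 : ℝ)) ^ q * Real.exp (-(t * (ℓ + 1)))) ≤
      2 ^ q * q.factorial * t * Real.exp (-(t * (ℓ + 1)) / 2) := by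
  set x : ℝ := t * (ℓ + 1) with hxdef
  have hx : 0 ≤ x := by positivity
  have h1 : t ^ (q+1) * (((ℓ + 1 : ℝ)) ^ q * Real.exp (-x)) = t * (x ^ q * Real.exp (-x)) := by
    rw [hxdef, mul_pow]; ring
  rw [h1]
  have h2 : x ^ q * Real.exp (-x) ≤ 2 ^ q * q.factorial * Real.exp (-x/2) := by
    have h4 : Real.exp (x/2) * Real.exp (-x) = Real.exp (-x/2) := by
      rw [← Real.exp_add]; congr 1; ring
    have := pow_le_exp_half q hx
    calc x ^ q * Real.exp (-x) ≤ (2 ^ q * q.factorial * Real.exp (x/2)) * Real.exp (-x) :=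
          mul_le_mul_of_nonneg_right this (Real.exp_nonneg _)
      _ = 2 ^ q * q.factorial * (Real.exp (x/2) * Real.exp (-x)) := by ring
      _ = 2 ^ q * q.factorial * Real.exp (-x/2) := by rw [h4]
  calc t * (x ^ q * Real.exp (-x)) ≤ t * (2 ^ q * q.factorial * Real.exp (-x/2)) :=
        mul_le_mul_of_nonneg_left h2 ht.le
    _ = 2 ^ q * q.factorial * t * Real.exp (-x/2) := by ring

lemma Sq_global_bound (q : ℕ) {t : ℝ} (ht : 0 < t) :
    t ^ (q+1) * Sq q t ≤ 2 ^ (q+1) * q.factorial := by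
  have hsum := summable_Sq q ht
  have hr : Real.exp (-(t/2)) < 1 := Real.exp_lt_one_iff.mpr (by linarith)
  have hr0 : 0 ≤ Real.exp (-(t/2)) := Real.exp_nonneg _
  have heq : ∀ ℓ : ℕ, Real.exp (-(t * (ℓ + 1)) / 2) = Real.exp (-(t/2)) * (Real.exp (-(t/2))) ^ ℓ := by
    intro ℓ; rw [← Real.exp_nat_mul, ← Real.exp_add]; ring_nf
  have hgeo : Summable (fun ℓ : ℕ => Real.exp (-(t * (ℓ + 1)) / 2)) := by
    refine (((summable_geometric_of_lt_one hr0 hr).mul_left (Real.exp (-(t/2))))).congr fun ℓ => (heq ℓ).symm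
  rw [Sq, ← tsum_mul_left]
  have hle : ∑' ℓ : ℕ, t ^ (q+1) * (((ℓ + 1 : ℝ)) ^ q * Real.exp (-(t * (ℓ + 1)))) ≤
      ∑' ℓ : ℕ, 2 ^ q * q.factorial * t * Real.exp (-(t * (ℓ + 1)) / 2) := by
    refine Summable.tsum_le_tsum (fun ℓ => Sq_term_bound q ht ℓ) ((hsum.mul_left _)) (hgeo.mul_left _)
  refine hle.trans ?_
  rw [tsum_mul_left]
  have hgeoval : ∑' ℓ : ℕ, Real.exp (-(t * (ℓ + 1)) / 2) ≤ 2 / t := by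
    rw [tsum_congr heq, tsum_mul_left, tsum_geometric_of_lt_one hr0 hr]
    -- exp(-t/2)/(1 - exp(-t/2)) = 1/(exp(t/2)-1) ≤ 2/t
    have h1 : Real.exp (-(t/2)) * (1 - Real.exp (-(t/2)))⁻¹ = (Real.exp (t/2) - 1)⁻¹ := by
      rw [Real.exp_neg]
      field_simp
    rw [h1]
    have h2 : t / 2 ≤ Real.exp (t/2) - 1 := by
      have := Real.add_one_le_exp (t/2); linarith
    have h3 : (Real.exp (t/2) - 1)⁻¹ ≤ (t/2)⁻¹ :=
      inv_anti₀ (by linarith) h2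
    calc (Real.exp (t/2) - 1)⁻¹ ≤ (t/2)⁻¹ := h3
      _ = 2 / t := by rw [inv_div]
  calc (2:ℝ) ^ q * q.factorial * t * ∑' ℓ : ℕ, Real.exp (-(t * (ℓ + 1)) / 2)
      ≤ 2 ^ q * q.factorial * t * (2 / t) := by
        refine mul_le_mul_of_nonneg_left hgeoval (by positivity)
    _ = 2 ^ (q+1) * q.factorial := by field_simp; ring



lemma integrableOn_pow_exp (m : ℕ) :
    IntegrableOn (fun x : ℝ => x ^ m * Real.exp (-x)) (Set.Ioi 0) := by
  have h := Real.GammaIntegral_convergent (s := (m : ℝ) + 1) (by positivity)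
  refine h.congr_fun ?_ measurableSet_Ioi
  intro x hx
  simp only [add_sub_cancel_right, Real.rpow_natCast]
  ring

lemma integral_pow_exp (m : ℕ) :
    ∫ x in Set.Ioi 0, x ^ m * Real.exp (-x) = m.factorial := by
  have h := Real.Gamma_eq_integral (s := (m : ℝ) + 1) (by positivity)
  rw [Real.Gamma_nat_eq_factorial] at h
  rw [h]
  refine MeasureTheory.setIntegral_congr_fun measurableSet_Ioi fun x hx => ?_
  simp only [add_sub_cancel_right, Real.rpow_natCast]
  ring

lemma union_Ioc_eq_Ioi {t : ℝ} (ht : 0 < t) :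
    (⋃ ℓ : ℕ, Set.Ioc (t * ℓ) (t * (ℓ + 1))) = Set.Ioi 0 := by
  ext x
  simp only [Set.mem_iUnion, Set.mem_Ioc, Set.mem_Ioi]
  constructor
  · rintro ⟨ℓ, h1, h2⟩
    have : (0:ℝ) ≤ t * ℓ := by positivity
    linarith
  · intro hx
    have hxt : 0 < x / t := div_pos hx ht
    set m := ⌈x / t⌉₊ with hm
    have hm1 : 1 ≤ m := Nat.one_le_iff_ne_zero.mpr (by
      simp only [hm, ne_eq, Nat.ceil_eq_zero, not_le]; exact hxt)
    refine ⟨m - 1, ?_, ?_⟩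
    · have h1 : (m : ℝ) < x / t + 1 := Nat.ceil_lt_add_one hxt.le
      have hcast : ((m - 1 : ℕ) : ℝ) = (m : ℝ) - 1 := by
        push_cast [hm1]; ring
      rw [hcast]
      have : (m : ℝ) - 1 < x / t := by linarith
      calc t * ((m:ℝ) - 1) < t * (x / t) := by
            exact mul_lt_mul_of_pos_left this ht
        _ = x := by field_simp
    · have h2 : x / t ≤ (m : ℝ) := Nat.le_ceil _
      have hcast : ((m - 1 : ℕ) : ℝ) + 1 = (m : ℝ) := by push_cast [hm1]; ring
      rw [hcast]
      calc x = t * (x / t) := by field_simp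
        _ ≤ t * m := mul_le_mul_of_nonneg_left h2 ht.le

lemma pairwise_disjoint_Ioc_scaled {t : ℝ} (ht : 0 < t) :
    Pairwise (Function.onFun Disjoint fun ℓ : ℕ => Set.Ioc (t * ℓ) (t * (ℓ + 1))) := by
  intro i j hij
  rcases hij.lt_or_gt with h | h
  · simp only [Function.onFun]
    rw [Set.Ioc_disjoint_Ioc]
    have hij' : (i:ℝ) + 1 ≤ j := by exact_mod_cast h
    calc min (t * (i + 1)) (t * (j + 1)) ≤ t * (i+1) := min_le_left _ _
      _ ≤ t * j := mul_le_mul_of_nonneg_left hij' ht.le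
      _ ≤ max (t * i) (t * j) := le_max_right _ _
  · simp only [Function.onFun]
    rw [Set.Ioc_disjoint_Ioc]
    have hij' : (j:ℝ) + 1 ≤ i := by exact_mod_cast h
    calc min (t * (i + 1)) (t * (j + 1)) ≤ t * (j+1) := min_le_right _ _
      _ ≤ t * i := mul_le_mul_of_nonneg_left hij' ht.le
      _ ≤ max (t * i) (t * j) := le_max_left _ _






lemma Sq_key (q : ℕ) (hq : 1 ≤ q) {t : ℝ} (ht : 0 < t) :
    |t ^ (q + 1) * Sq q t - (q.factorial : ℝ)| ≤ 2 * q.factorial * t := by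
  set g : ℝ → ℝ := fun x => x ^ q * Real.exp (-x) with hgdef
  set ψ : ℝ → ℝ := fun x => (q : ℝ) * (x ^ (q - 1) * Real.exp (-x)) + x ^ q * Real.exp (-x)
    with hψdef
  have hg_cont : Continuous g := by fun_prop
  have hψ_cont : Continuous ψ := by fun_prop
  have hg_int : IntegrableOn g (Set.Ioi 0) := integrableOn_pow_exp q
  have hψ_int : IntegrableOn ψ (Set.Ioi 0) :=
    ((integrableOn_pow_exp (q - 1)).const_mul _).add (integrableOn_pow_exp q)
  have hψ_val : ∫ x in Set.Ioi 0, ψ x = 2 * q.factorial := by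
    rw [hψdef]
    rw [integral_add (((integrableOn_pow_exp (q - 1)).const_mul _)) (integrableOn_pow_exp q),
      integral_const_mul, integral_pow_exp, integral_pow_exp]
    have : (q : ℝ) * ((q - 1).factorial : ℝ) = (q.factorial : ℝ) := by
      exact_mod_cast congrArg (Nat.cast : ℕ → ℝ) (Nat.mul_factorial_pred (by omega))
    rw [this]; ring
  have hψ_nonneg : ∀ x : ℝ, 0 ≤ x → 0 ≤ ψ x := by
    intro x hx
    have h1 : (0:ℝ) ≤ x ^ (q-1) := pow_nonneg hx _
    have h2 : (0:ℝ) ≤ x ^ q := pow_nonneg hx _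
    have := Real.exp_nonneg (-x)
    positivity
  -- derivative
  set dg : ℝ → ℝ := fun x => (q : ℝ) * x ^ (q - 1) * Real.exp (-x) + x ^ q * (Real.exp (-x) * (-1))
    with hdgdef
  have hderiv : ∀ x : ℝ, HasDerivAt g (dg x) x := by
    intro x
    have h1 : HasDerivAt (fun y : ℝ => y ^ q) ((q : ℝ) * x ^ (q - 1)) x := hasDerivAt_pow q x
    have h2 : HasDerivAt (fun y : ℝ => Real.exp (-y)) (Real.exp (-x) * (-1)) x :=
      (Real.hasDerivAt_exp (-x)).comp x (hasDerivAt_neg x)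
    exact h1.mul h2
  have hdg_cont : Continuous dg := by fun_prop
  have hdg_abs : ∀ x : ℝ, 0 ≤ x → |dg x| ≤ ψ x := by
    intro x hx
    have h1 : (0:ℝ) ≤ (q:ℝ) * x ^ (q-1) * Real.exp (-x) := by positivity
    have h2 : (0:ℝ) ≤ x ^ q * Real.exp (-x) := by positivity
    rw [hdgdef, hψdef]
    simp only
    rw [abs_le]
    constructor <;> nlinarith
  -- per-interval sums
  set I : ℕ → ℝ := fun ℓ => ∫ x in Set.Ioc (t * ℓ) (t * (ℓ + 1)), g x with hIdef
  set J : ℕ → ℝ := fun ℓ => ∫ x in Set.Ioc (t * ℓ) (t * (ℓ + 1)), ψ x with hJdef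
  have hmeas : ∀ ℓ : ℕ, MeasurableSet (Set.Ioc (t * (ℓ:ℝ)) (t * (ℓ + 1))) :=
    fun ℓ => measurableSet_Ioc
  have hI_sum : HasSum I (∫ x in Set.Ioi 0, g x) := by
    have := hasSum_integral_iUnion (μ := volume) (f := g) hmeas
      (pairwise_disjoint_Ioc_scaled ht) (by rw [union_Ioc_eq_Ioi ht]; exact hg_int)
    rwa [union_Ioc_eq_Ioi ht] at this
  have hJ_sum : HasSum J (∫ x in Set.Ioi 0, ψ x) := by
    have := hasSum_integral_iUnion (μ := volume) (f := ψ) hmeas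
      (pairwise_disjoint_Ioc_scaled ht) (by rw [union_Ioc_eq_Ioi ht]; exact hψ_int)
    rwa [union_Ioc_eq_Ioi ht] at this
  -- the key per-interval estimate
  have claim : ∀ ℓ : ℕ, |t * g (t * (ℓ + 1)) - I ℓ| ≤ t * J ℓ := by
    intro ℓ
    set a : ℝ := t * ℓ with hadef
    set b : ℝ := t * (ℓ + 1) with hbdef
    have ha0 : 0 ≤ a := by positivity
    have hab : a ≤ b := by
      rw [hadef, hbdef]
      have : (ℓ:ℝ) ≤ (ℓ:ℝ) + 1 := by linarith
      exact mul_le_mul_of_nonneg_left this ht.le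
    have hba : b - a = t := by rw [hadef, hbdef]; ring
    set C : ℝ := ∫ x in a..b, ψ x with hCdef
    have hJeq : J ℓ = C := by
      rw [hJdef, hCdef, intervalIntegral.integral_of_le hab]
    have hIeq : I ℓ = ∫ x in a..b, g x := by
      rw [hIdef, intervalIntegral.integral_of_le hab]
    -- pointwise estimate on [a,b]
    have hpoint : ∀ y ∈ Set.Icc a b, |g b - g y| ≤ C := by
      intro y hy
      have hyb : y ≤ b := hy.2
      have hay : a ≤ y := hy.1
      have hy0 : 0 ≤ y := le_trans ha0 hay
      have hftc : ∫ x in y..b, dg x = g b - g y :=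
        intervalIntegral.integral_eq_sub_of_hasDerivAt (fun x _ => hderiv x)
          (hdg_cont.intervalIntegrable y b)
      rw [← hftc]
      calc |∫ x in y..b, dg x| ≤ ∫ x in y..b, |dg x| :=
            intervalIntegral.abs_integral_le_integral_abs hyb
        _ ≤ ∫ x in y..b, ψ x := by
            refine intervalIntegral.integral_mono_on hyb
              (hdg_cont.abs.intervalIntegrable y b) (hψ_cont.intervalIntegrable y b) ?_
            intro x hx
            exact hdg_abs x (le_trans hy0 hx.1)
        _ ≤ C := by
            rw [hCdef, ← intervalIntegral.integral_add_adjacent_intervals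
              (hψ_cont.intervalIntegrable a y) (hψ_cont.intervalIntegrable y b)]
            have : 0 ≤ ∫ x in a..y, ψ x :=
              intervalIntegral.integral_nonneg hay (fun x hx => hψ_nonneg x (le_trans ha0 hx.1))
            linarith
    have htg : t * g b = ∫ _ in a..b, g b := by
      rw [intervalIntegral.integral_const, hba, smul_eq_mul]
    have hdiff : t * g b - I ℓ = ∫ y in a..b, (g b - g y) := by
      rw [htg, hIeq, intervalIntegral.integral_sub (intervalIntegrable_const)
        (hg_cont.intervalIntegrable a b)]
    rw [hdiff]
    calc |∫ y in a..b, (g b - g y)| ≤ ∫ y in a..b, |g b - g y| :=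
          intervalIntegral.abs_integral_le_integral_abs hab
      _ ≤ ∫ _ in a..b, C := by
          refine intervalIntegral.integral_mono_on hab
            (((continuous_const.sub hg_cont).abs).intervalIntegrable a b)
            (intervalIntegrable_const) ?_
          exact fun y hy => hpoint y hy
      _ = t * C := by rw [intervalIntegral.integral_const, hba, smul_eq_mul]
      _ = t * J ℓ := by rw [hJeq]
  -- assemble
  have hterm_sum : Summable (fun ℓ : ℕ => t * g (t * (ℓ + 1))) := by
    refine ((summable_Sq q ht).mul_left (t ^ (q + 1))).congr fun ℓ => ?_
    simp only [hgdef, mul_pow]; ring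
  have htsum_eq : t ^ (q + 1) * Sq q t = ∑' ℓ : ℕ, t * g (t * (ℓ + 1)) := by
    rw [Sq, ← tsum_mul_left]
    exact tsum_congr fun ℓ => by simp only [hgdef, mul_pow]; ring
  have hIsummable : Summable I := hI_sum.summable
  have hJsummable : Summable J := hJ_sum.summable
  have hIval : ∑' ℓ, I ℓ = (q.factorial : ℝ) := hI_sum.tsum_eq.trans (integral_pow_exp q)
  have hJval : ∑' ℓ, J ℓ = 2 * q.factorial := hJ_sum.tsum_eq.trans hψ_val
  have hdsum : Summable (fun ℓ : ℕ => t * g (t * (ℓ + 1)) - I ℓ) := hterm_sum.sub hIsummable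
  have hdiffsum : t ^ (q + 1) * Sq q t - (q.factorial : ℝ)
      = ∑' ℓ : ℕ, (t * g (t * (ℓ + 1)) - I ℓ) := by
    rw [htsum_eq, ← hIval, Summable.tsum_sub hterm_sum hIsummable]
  rw [hdiffsum]
  calc |∑' ℓ : ℕ, (t * g (t * (ℓ + 1)) - I ℓ)|
      ≤ ∑' ℓ : ℕ, |t * g (t * (ℓ + 1)) - I ℓ| := by
        have := norm_tsum_le_tsum_norm (f := fun ℓ : ℕ => t * g (t * (ℓ + 1)) - I ℓ)
          (by simpa only [Real.norm_eq_abs] using hdsum.abs)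
        simpa only [Real.norm_eq_abs] using this
    _ ≤ ∑' ℓ : ℕ, t * J ℓ := Summable.tsum_le_tsum claim hdsum.abs (hJsummable.mul_left t)
    _ = t * (2 * q.factorial) := by rw [tsum_mul_left, hJval]
    _ = 2 * q.factorial * t := by ring




noncomputable def phiQ (q : ℕ) (t : ℝ) : ℝ := t ^ (q + 1) * Sq q t / q.factorial


lemma rpow_half (q n : ℕ) (hn : 1 ≤ n) :
    (n : ℝ) ^ (((q : ℝ) + 1) / 2) = (Real.sqrt n) ^ (q + 1) := by
  have hn0 : (0:ℝ) ≤ n := Nat.cast_nonneg n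
  rw [Real.sqrt_eq_rpow, ← Real.rpow_natCast ((n:ℝ) ^ ((1:ℝ)/2)) (q+1), ← Real.rpow_mul hn0]
  congr 1
  push_cast
  ring

set_option maxHeartbeats 1000000 in
lemma ratio_eq (a : ℕ → ℝ) (γ : ℝ) (hγ : 0 < γ) (q : ℕ) (hq : 1 ≤ q)
    (hq_sum : ∀ α : ℝ, 0 < α →
      Summable (fun k : ℕ => ((k + 1 : ℝ)) ^ q * |a (k + 1)| * Real.exp (-((k + 1) * α))))
    (n : ℕ) (hn : 1 ≤ n) :
    (∑' ℓ : ℕ, ((ℓ + 1 : ℝ)) ^ q *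
        ∑' k : ℕ, ((k + 1 : ℝ)) ^ q * a (k + 1) *
          Real.exp (-((k + 1) * (γ / Real.sqrt n) * (ℓ + 1)))) /
      (((Nat.factorial q : ℝ) / γ ^ (q - 1)) * (n : ℝ) ^ (((q : ℝ) + 1) / 2)) =
    (∑' k : ℕ, (a (k + 1) / (k + 1)) * phiQ q ((k + 1) * (γ / Real.sqrt n))) / γ ^ 2 := by
  have hn0 : (0:ℝ) < n := by exact_mod_cast hn
  have hs : 0 < Real.sqrt n := Real.sqrt_pos.mpr hn0
  set β : ℝ := γ / Real.sqrt n with hβdef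
  have hβ : 0 < β := div_pos hγ hs
  have hfq : (0:ℝ) < q.factorial := by exact_mod_cast q.factorial_pos
  set G : ℕ × ℕ → ℝ := fun p => ((p.1 + 1 : ℝ)) ^ q *
      (((p.2 + 1 : ℝ)) ^ q * a (p.2 + 1) * Real.exp (-((p.2 + 1) * β * (p.1 + 1)))) with hGdef
  have habs : ∀ ℓ k : ℕ, |((k + 1 : ℝ)) ^ q * a (k + 1) * Real.exp (-((k + 1) * β * (ℓ + 1)))|
      = ((k + 1 : ℝ)) ^ q * |a (k + 1)| * Real.exp (-((k + 1) * β * (ℓ + 1))) := by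
    intro ℓ k
    rw [abs_mul, abs_mul, Real.abs_exp, abs_of_nonneg (by positivity : (0:ℝ) ≤ ((k + 1 : ℝ)) ^ q)]
  have h_inner : ∀ ℓ : ℕ, Summable (fun k : ℕ =>
      ((k + 1 : ℝ)) ^ q * a (k + 1) * Real.exp (-((k + 1) * β * (ℓ + 1)))) := by
    intro ℓ
    apply Summable.of_abs
    refine (hq_sum (β * ((ℓ:ℝ) + 1)) (by positivity)).congr fun k => ?_
    rw [habs ℓ k]
    congr 2
    ring
  -- summability of |G|
  have hGabs_eq : ∀ p : ℕ × ℕ, |G p| = ((p.1 + 1 : ℝ)) ^ q *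
      (((p.2 + 1 : ℝ)) ^ q * |a (p.2 + 1)| * Real.exp (-((p.2 + 1) * β * (p.1 + 1)))) := by
    intro p
    rw [hGdef]
    simp only
    rw [abs_mul, habs p.1 p.2, abs_of_nonneg (by positivity : (0:ℝ) ≤ ((p.1 + 1 : ℝ)) ^ q)]
  have hC := hq_sum β hβ
  set C : ℝ := ∑' k : ℕ, ((k + 1 : ℝ)) ^ q * |a (k + 1)| * Real.exp (-((k + 1) * β)) with hCdef
  have hC_nonneg : 0 ≤ C := tsum_nonneg fun k => by positivity
  have hGabs : Summable (fun p : ℕ × ℕ => |G p|) := by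
    rw [summable_prod_of_nonneg (fun p => abs_nonneg _)]
    constructor
    · intro ℓ
      refine (((h_inner ℓ).abs.mul_left (((ℓ:ℝ) + 1) ^ q))).congr fun k => ?_
      rw [hGabs_eq (ℓ, k), habs ℓ k]
    · -- compare with (ℓ+1)^q e^{-βℓ} C
      have hmaj : Summable (fun ℓ : ℕ => ((ℓ:ℝ) + 1) ^ q * Real.exp (-(β * ℓ)) * C) := by
        have h1 : Summable (fun ℓ : ℕ => ((ℓ:ℝ) + 1) ^ q * Real.exp (-(β * (ℓ + 1)))) :=
          summable_Sq q hβ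
        have h2 := (h1.mul_left (Real.exp β)).mul_right C
        refine h2.congr fun ℓ => ?_
        have hE : Real.exp β * Real.exp (-(β * ((ℓ:ℝ) + 1))) = Real.exp (-(β * ℓ)) := by
          rw [← Real.exp_add]; congr 1; ring
        calc Real.exp β * (((ℓ:ℝ) + 1) ^ q * Real.exp (-(β * (↑ℓ + 1)))) * C
            = ((ℓ:ℝ) + 1) ^ q * (Real.exp β * Real.exp (-(β * (↑ℓ + 1)))) * C := by ring
          _ = ((ℓ:ℝ) + 1) ^ q * Real.exp (-(β * ↑ℓ)) * C := by rw [hE]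
      refine Summable.of_nonneg_of_le (fun ℓ => tsum_nonneg fun k => abs_nonneg _)
        (fun ℓ => ?_) hmaj
      have hle : ∀ k : ℕ, |G (ℓ, k)| ≤
          ((ℓ:ℝ) + 1) ^ q * Real.exp (-(β * ℓ)) *
            (((k + 1 : ℝ)) ^ q * |a (k + 1)| * Real.exp (-((k + 1) * β))) := by
        intro k
        rw [hGabs_eq (ℓ, k)]
        have hexp : Real.exp (-(((k:ℝ) + 1) * β * ((ℓ:ℝ) + 1))) ≤
            Real.exp (-(β * ℓ)) * Real.exp (-(((k:ℝ) + 1) * β)) := by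
          rw [← Real.exp_add]
          apply Real.exp_le_exp.mpr
          have hkl : β * ℓ ≤ ((k:ℝ) + 1) * β * ℓ := by
            have h1k : (0:ℝ) ≤ (k:ℝ) := Nat.cast_nonneg k
            have h1l : (0:ℝ) ≤ (ℓ:ℝ) := Nat.cast_nonneg ℓ
            nlinarith [mul_nonneg (mul_nonneg h1k hβ.le) h1l]
          nlinarith
        calc ((ℓ:ℝ) + 1) ^ q * (((k + 1 : ℝ)) ^ q * |a (k + 1)| *
              Real.exp (-((k + 1) * β * (ℓ + 1))))
            ≤ ((ℓ:ℝ) + 1) ^ q * (((k + 1 : ℝ)) ^ q * |a (k + 1)| *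
              (Real.exp (-(β * ℓ)) * Real.exp (-(((k:ℝ) + 1) * β)))) := by
              have h0 : (0:ℝ) ≤ ((k + 1 : ℝ)) ^ q * |a (k + 1)| := by positivity
              have := mul_le_mul_of_nonneg_left hexp h0
              have h1 : (0:ℝ) ≤ ((ℓ:ℝ) + 1) ^ q := by positivity
              nlinarith
          _ = ((ℓ:ℝ) + 1) ^ q * Real.exp (-(β * ℓ)) *
              (((k + 1 : ℝ)) ^ q * |a (k + 1)| * Real.exp (-((k + 1) * β))) := by ring
      calc ∑' k : ℕ, |G (ℓ, k)| ≤ ∑' k : ℕ, ((ℓ:ℝ) + 1) ^ q * Real.exp (-(β * ℓ)) *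
            (((k + 1 : ℝ)) ^ q * |a (k + 1)| * Real.exp (-((k + 1) * β))) := by
            refine Summable.tsum_le_tsum hle ?_ (hC.mul_left _)
            refine (((h_inner ℓ).abs.mul_left (((ℓ:ℝ) + 1) ^ q))).congr fun k => ?_
            rw [hGabs_eq (ℓ, k), habs ℓ k]
        _ = ((ℓ:ℝ) + 1) ^ q * Real.exp (-(β * ℓ)) * C := by rw [tsum_mul_left, hCdef]
  have hG : Summable G := hGabs.of_abs
  -- Fubini
  have hswap : (∑' ℓ : ℕ, ∑' k : ℕ, G (ℓ, k)) = ∑' k : ℕ, ∑' ℓ : ℕ, G (ℓ, k) := by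
    have hGrow : ∀ ℓ : ℕ, Summable fun k : ℕ => G (ℓ, k) := fun ℓ =>
      (h_inner ℓ).mul_left (((ℓ:ℝ) + 1) ^ q)
    have h1 : (∑' p : ℕ × ℕ, G p) = ∑' ℓ : ℕ, ∑' k : ℕ, G (ℓ, k) :=
      Summable.tsum_prod' hG hGrow
    have hGs : Summable (fun p : ℕ × ℕ => G p.swap) := hG.prod_symm
    have h2 : (∑' p : ℕ × ℕ, G p.swap) = ∑' k : ℕ, ∑' ℓ : ℕ, G (ℓ, k) :=
      Summable.tsum_prod' hGs fun k => by
        refine ((summable_Sq q (show 0 < ((k:ℝ)+1) * β by positivity)).mul_left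
          (((k + 1 : ℝ)) ^ q * a (k + 1))).congr fun ℓ => ?_
        rw [hGdef]
        simp only [Prod.swap]
        ring
    have h3 : (∑' p : ℕ × ℕ, G p.swap) = ∑' p : ℕ × ℕ, G p := by
      simpa using Equiv.tsum_eq (Equiv.prodComm ℕ ℕ) G
    rw [← h1, ← h3, h2]
  -- identify numerator
  have hnum : (∑' ℓ : ℕ, ((ℓ + 1 : ℝ)) ^ q *
        ∑' k : ℕ, ((k + 1 : ℝ)) ^ q * a (k + 1) *
          Real.exp (-((k + 1) * β * (ℓ + 1)))) =
      ∑' k : ℕ, ((k + 1 : ℝ)) ^ q * a (k + 1) * Sq q (((k:ℝ) + 1) * β) := by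
    calc (∑' ℓ : ℕ, ((ℓ + 1 : ℝ)) ^ q * ∑' k : ℕ, ((k + 1 : ℝ)) ^ q * a (k + 1) *
          Real.exp (-((k + 1) * β * (ℓ + 1))))
        = ∑' ℓ : ℕ, ∑' k : ℕ, G (ℓ, k) := by
          refine tsum_congr fun ℓ => ?_
          rw [← tsum_mul_left]
      _ = ∑' k : ℕ, ∑' ℓ : ℕ, G (ℓ, k) := hswap
      _ = ∑' k : ℕ, ((k + 1 : ℝ)) ^ q * a (k + 1) * Sq q (((k:ℝ) + 1) * β) := by
          refine tsum_congr fun k => ?_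
          rw [Sq, ← tsum_mul_left]
          refine tsum_congr fun ℓ => ?_
          rw [hGdef]
          simp only
          ring
  rw [hnum]
  -- rescale
  have hterm : ∀ k : ℕ, ((k + 1 : ℝ)) ^ q * a (k + 1) * Sq q (((k:ℝ) + 1) * β)
      = ((q.factorial : ℝ) / β ^ (q + 1)) *
        ((a (k + 1) / (k + 1)) * phiQ q (((k:ℝ) + 1) * β)) := by
    intro k
    have hk : (0:ℝ) < (k:ℝ) + 1 := by positivity
    rw [phiQ, mul_pow]
    field_simp
    ring
  have hnum2 : (∑' k : ℕ, ((k + 1 : ℝ)) ^ q * a (k + 1) * Sq q (((k:ℝ) + 1) * β))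
      = ((q.factorial : ℝ) / β ^ (q + 1)) *
        ∑' k : ℕ, (a (k + 1) / (k + 1)) * phiQ q (((k:ℝ) + 1) * β) := by
    rw [← tsum_mul_left]
    exact tsum_congr hterm
  rw [hnum2]
  -- the constant: (q!/β^{q+1}) = D / γ²
  have hrpow := rpow_half q n hn
  have hγq : γ ^ (q - 1) * γ ^ 2 = γ ^ (q + 1) := by
    rw [← pow_add]
    congr 1
    omega
  have hβpow : β ^ (q + 1) = γ ^ (q + 1) / (Real.sqrt n) ^ (q + 1) := by
    rw [hβdef, div_pow]
  have hD : ((q.factorial : ℝ) / γ ^ (q - 1)) * (n : ℝ) ^ (((q : ℝ) + 1) / 2)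
      = ((q.factorial : ℝ) / β ^ (q + 1)) * γ ^ 2 := by
    rw [hrpow, hβpow]
    have hγ0 : γ ≠ 0 := hγ.ne'
    have hs0 : Real.sqrt n ≠ 0 := hs.ne'
    field_simp
    rw [← hγq]
  rw [hD]
  have hβq0 : ((q.factorial : ℝ) / β ^ (q + 1)) ≠ 0 := by positivity
  have hγ20 : (γ:ℝ) ^ 2 ≠ 0 := by positivity
  rw [mul_comm ((q.factorial : ℝ) / β ^ (q + 1)) (γ ^ 2), ← div_div,
    mul_div_assoc, mul_comm, mul_div_assoc, div_self hβq0, mul_one]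






lemma phiQ_sub_one (q : ℕ) (hq : 1 ≤ q) {t : ℝ} (ht : 0 < t) : |phiQ q t - 1| ≤ 2 * t := by
  have hfq : (0:ℝ) < q.factorial := by exact_mod_cast q.factorial_pos
  have h := Sq_key q hq ht
  rw [phiQ]
  have heq : t ^ (q + 1) * Sq q t / q.factorial - 1
      = (t ^ (q + 1) * Sq q t - q.factorial) / q.factorial := by
    field_simp
  rw [heq, abs_div, abs_of_pos hfq, div_le_iff₀ hfq]
  calc |t ^ (q + 1) * Sq q t - (q.factorial:ℝ)| ≤ 2 * q.factorial * t := h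
    _ = 2 * t * q.factorial := by ring

lemma phiQ_nonneg (q : ℕ) {t : ℝ} (ht : 0 < t) : 0 ≤ phiQ q t := by
  have hfq : (0:ℝ) < q.factorial := by exact_mod_cast q.factorial_pos
  have hS : 0 ≤ Sq q t := tsum_nonneg fun ℓ => by positivity
  have : 0 ≤ t ^ (q+1) * Sq q t := by positivity
  exact div_nonneg this hfq.le

lemma phiQ_le (q : ℕ) {t : ℝ} (ht : 0 < t) : phiQ q t ≤ 2 ^ (q + 1) := by
  have hfq : (0:ℝ) < q.factorial := by exact_mod_cast q.factorial_pos
  rw [phiQ, div_le_iff₀ hfq]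
  calc t ^ (q+1) * Sq q t ≤ 2 ^ (q+1) * q.factorial := Sq_global_bound q ht
    _ = 2 ^ (q+1) * q.factorial := rfl

lemma sqrt_nat_tendsto : Tendsto (fun n : ℕ => Real.sqrt n) atTop atTop := by
  rw [tendsto_atTop]
  intro b
  filter_upwards [eventually_ge_atTop ⌈b * b⌉₊] with n hn
  rcases le_or_gt b 0 with hb | hb
  · exact le_trans hb (Real.sqrt_nonneg _)
  · have h1 : b * b ≤ (n : ℝ) := le_trans (Nat.le_ceil _) (by exact_mod_cast hn)
    calc b = Real.sqrt (b * b) := (Real.sqrt_mul_self hb.le).symm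
      _ ≤ Real.sqrt n := Real.sqrt_le_sqrt h1

theorem stmt_10 (a : ℕ → ℝ) (γ : ℝ) (hγ : 0 < γ)
    (hsum : Summable (fun k : ℕ => |a (k + 1)| / (k + 1)))
    (hγ2 : γ ^ 2 = ∑' k : ℕ, a (k + 1) / (k + 1))
    (q : ℕ) (hq : 1 ≤ q)
    (hq_sum : ∀ α : ℝ, 0 < α →
      Summable (fun k : ℕ => ((k + 1 : ℝ)) ^ q * |a (k + 1)| * Real.exp (-((k + 1) * α)))) :
    Tendsto
      (fun n : ℕ =>
        (∑' ℓ : ℕ, ((ℓ + 1 : ℝ)) ^ q *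
            ∑' k : ℕ, ((k + 1 : ℝ)) ^ q * a (k + 1) *
              Real.exp (-((k + 1) * (γ / Real.sqrt n) * (ℓ + 1)))) /
          (((Nat.factorial q : ℝ) / γ ^ (q - 1)) * (n : ℝ) ^ (((q : ℝ) + 1) / 2)))
      atTop (nhds 1) := by
  have hγ2pos : (0:ℝ) < γ ^ 2 := by positivity
  -- the limit of the normalized sums
  have hα0 : Tendsto (fun n : ℕ => γ / Real.sqrt n) atTop (nhds 0) :=
    Tendsto.div_atTop tendsto_const_nhds sqrt_nat_tendsto
  have hαpos : ∀ n : ℕ, 1 ≤ n → 0 < γ / Real.sqrt n := by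
    intro n hn
    have : (0:ℝ) < n := by exact_mod_cast hn
    exact div_pos hγ (Real.sqrt_pos.mpr this)
  have hφk : ∀ k : ℕ, Tendsto (fun n : ℕ => phiQ q (((k:ℝ) + 1) * (γ / Real.sqrt n)))
      atTop (nhds 1) := by
    intro k
    have hk : (0:ℝ) < (k:ℝ) + 1 := by positivity
    have ht0 : Tendsto (fun n : ℕ => ((k:ℝ) + 1) * (γ / Real.sqrt n)) atTop (nhds 0) := by
      have := hα0.const_mul ((k:ℝ) + 1)
      simpa using this
    have hz : Tendsto (fun n : ℕ => phiQ q (((k:ℝ) + 1) * (γ / Real.sqrt n)) - 1)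
        atTop (nhds 0) := by
      refine squeeze_zero_norm' (a := fun n : ℕ => 2 * (((k:ℝ) + 1) * (γ / Real.sqrt n))) ?_
        (by simpa using ht0.const_mul 2)
      filter_upwards [eventually_ge_atTop 1] with n hn
      rw [Real.norm_eq_abs]
      exact phiQ_sub_one q hq (by positivity)
    have := hz.add_const 1
    simpa using this
  have hT : Tendsto (fun n : ℕ =>
      ∑' k : ℕ, (a (k + 1) / ((k:ℝ) + 1)) * phiQ q (((k:ℝ) + 1) * (γ / Real.sqrt n)))
      atTop (nhds (γ ^ 2)) := by
    have hbound : Summable (fun k : ℕ => 2 ^ (q+1) * (|a (k + 1)| / ((k:ℝ) + 1))) :=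
      hsum.mul_left _
    have hlim : ∀ k : ℕ, Tendsto (fun n : ℕ =>
        (a (k + 1) / ((k:ℝ) + 1)) * phiQ q (((k:ℝ) + 1) * (γ / Real.sqrt n)))
        atTop (nhds (a (k + 1) / ((k:ℝ) + 1))) := by
      intro k
      have := (hφk k).const_mul (a (k + 1) / ((k:ℝ) + 1))
      simpa using this
    have hbd : ∀ᶠ n : ℕ in atTop, ∀ k : ℕ,
        ‖(a (k + 1) / ((k:ℝ) + 1)) * phiQ q (((k:ℝ) + 1) * (γ / Real.sqrt n))‖ ≤
          2 ^ (q+1) * (|a (k + 1)| / ((k:ℝ) + 1)) := by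
      filter_upwards [eventually_ge_atTop 1] with n hn k
      have hk : (0:ℝ) < (k:ℝ) + 1 := by positivity
      have htpos : 0 < ((k:ℝ) + 1) * (γ / Real.sqrt n) :=
        mul_pos hk (hαpos n hn)
      rw [Real.norm_eq_abs, abs_mul, abs_of_nonneg (phiQ_nonneg q htpos), abs_div,
        abs_of_pos hk]
      calc |a (k + 1)| / ((k:ℝ) + 1) * phiQ q (((k:ℝ) + 1) * (γ / Real.sqrt n))
          ≤ |a (k + 1)| / ((k:ℝ) + 1) * 2 ^ (q+1) := by
            refine mul_le_mul_of_nonneg_left (phiQ_le q htpos) (by positivity)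
        _ = 2 ^ (q+1) * (|a (k + 1)| / ((k:ℝ) + 1)) := by ring
    have h := tendsto_tsum_of_dominated_convergence hbound hlim hbd
    rw [hγ2]
    exact h
  have hfinal : Tendsto (fun n : ℕ =>
      (∑' k : ℕ, (a (k + 1) / ((k:ℝ) + 1)) * phiQ q (((k:ℝ) + 1) * (γ / Real.sqrt n))) / γ ^ 2)
      atTop (nhds 1) := by
    have := hT.div_const (γ ^ 2)
    rwa [div_self hγ2pos.ne'] at this
  refine Tendsto.congr' ?_ hfinal
  filter_upwards [eventually_ge_atTop 1] with n hn
  exact (ratio_eq a γ hγ q hq hq_sum n hn).symm
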